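/- arXiv:2101.09514 — 2 statements merged into one kernel-verified Lean document; each statement's English description precedes it below -/
import Mathlib

section
/- With notation as above, the relative bias satisfies $(\alpha - \alpha_1)/\alpha \le N \, \Phi(\log(\delta\gamma/N)) (\Phi(\log\gamma))^{N-1} / (\Phi(\log(\gamma/N)))^N$. Consequently, choosing $\delta = (N/\gamma)\exp(\Phi^{-1}(\tfrac{\epsilon}{2N}(\Phi(\log(\gamma/N)))^N/(\Phi(\log\gamma))^{N-1}))$ ensures $(\alpha-\alpha_1)/\alpha \le \epsilon/2$. -/
open MeasureTheory ProbabilityTheory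

/-- `Φ` is the standard normal CDF. -/
noncomputable def Phi (x : ℝ) : ℝ := (ProbabilityTheory.gaussianReal 0 1 (Set.Iic x)).toReal

lemma gauss_Iic_pos (x : ℝ) : 0 < gaussianReal 0 1 (Set.Iic x) := by
  rw [pos_iff_ne_zero]
  intro h
  have := (gaussianReal_absolutelyContinuous' 0 one_ne_zero) h
  simp [Real.volume_Iic] at this

lemma Phi_pos (x : ℝ) : 0 < Phi x :=
  ENNReal.toReal_pos (gauss_Iic_pos x).ne' (measure_ne_top _ _)

theorem stmt_9 {Ω : Type*} [MeasureSpace Ω] [IsProbabilityMeasure (ℙ : Measure Ω)]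
    (N : ℕ) (hN : 0 < N) (γ δ ε : ℝ) (hγ : 0 < γ) (hδ0 : 0 < δ) (hδ1 : δ < 1) (hε : 0 < ε)
    (X : Fin N → Ω → ℝ) (hmeas : ∀ i, Measurable (X i))
    (hind : iIndepFun X ℙ)
    (hlaw : ∀ i, Measure.map (X i) ℙ = Measure.map Real.exp (gaussianReal 0 1))
    (α α₁ : ℝ)
    (hα : α = (ℙ {ω | ∑ i, X i ω ≤ γ}).toReal)
    (hα₁ : α₁ = (ℙ {ω | ∑ i, X i ω ≤ γ ∧ ∀ i, δ * γ / N < X i ω}).toReal) :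
    (α - α₁) / α
        ≤ N * Phi (Real.log (δ * γ / N)) * (Phi (Real.log γ)) ^ (N - 1)
            / (Phi (Real.log (γ / N))) ^ N ∧
    (Phi (Real.log (δ * γ / N))
        = ε / (2 * N) * (Phi (Real.log (γ / N))) ^ N / (Phi (Real.log γ)) ^ (N - 1)
      → (α - α₁) / α ≤ ε / 2) := by
  have hNR : (0:ℝ) < N := Nat.cast_pos.mpr hN
  set c : ℝ := δ * γ / N with hcdef
  have hc : 0 < c := by positivity
  have hγN : 0 < γ / N := by positivity
  -- law of each X i on Iic t for t > 0
  have hXt : ∀ (i : Fin N) (t : ℝ), 0 < t →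
      ℙ (X i ⁻¹' Set.Iic t) = gaussianReal 0 1 (Set.Iic (Real.log t)) := by
    intro i t ht
    rw [← Measure.map_apply (hmeas i) measurableSet_Iic, hlaw i,
      Measure.map_apply Real.measurable_exp measurableSet_Iic]
    congr 1
    ext x
    simp [Real.le_log_iff_exp_le ht]
  have hX0 : ∀ i, ℙ (X i ⁻¹' Set.Iic (0:ℝ)) = 0 := by
    intro i
    rw [← Measure.map_apply (hmeas i) measurableSet_Iic, hlaw i,
      Measure.map_apply Real.measurable_exp measurableSet_Iic]
    have : Real.exp ⁻¹' Set.Iic (0:ℝ) = ∅ := by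
      ext x; simp [(Real.exp_pos x).not_ge]
    rw [this, measure_empty]
  -- independence product formula
  have hprod : ∀ (s : Fin N → Set ℝ), (∀ i, MeasurableSet (s i)) →
      ℙ (⋂ i, X i ⁻¹' s i) = ∏ i, ℙ (X i ⁻¹' s i) := by
    intro s hs
    have := hind.measure_inter_preimage_eq_mul Finset.univ (fun i _ => hs i)
    simpa using this
  set A : Set Ω := {ω | ∑ i, X i ω ≤ γ} with hAdef
  have hsummeas : Measurable fun ω => ∑ i, X i ω :=
    Finset.measurable_sum _ fun i _ => hmeas i
  have hAmeas : MeasurableSet A := measurableSet_le hsummeas measurable_const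
  set B : Set Ω := ⋂ i, X i ⁻¹' Set.Ioi c with hBdef
  have hBmeas : MeasurableSet B :=
    MeasurableSet.iInter fun i => (hmeas i) measurableSet_Ioi
  have hAB : {ω | ∑ i, X i ω ≤ γ ∧ ∀ i, δ * γ / N < X i ω} = A ∩ B := by
    ext ω
    simp [hAdef, hBdef, Set.mem_iInter, hcdef]
  -- null event
  set E : Set Ω := ⋃ j, X j ⁻¹' Set.Iic (0:ℝ) with hEdef
  have hE0 : ℙ E = 0 := measure_iUnion_null fun j => hX0 j
  -- abbreviations for gaussian quantities (ENNReal)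
  set gc := gaussianReal 0 1 (Set.Iic (Real.log c)) with hgc
  set gg := gaussianReal 0 1 (Set.Iic (Real.log γ)) with hgg
  set gn := gaussianReal 0 1 (Set.Iic (Real.log (γ / N))) with hgn
  -- per-index bound
  have key : ∀ i : Fin N, ℙ (A ∩ X i ⁻¹' Set.Iic c) ≤ gc * gg ^ (N - 1) := by
    intro i
    set s : Fin N → Set ℝ := fun j => if j = i then Set.Iic c else Set.Iic γ with hsdef
    have hsub : A ∩ X i ⁻¹' Set.Iic c ⊆ E ∪ ⋂ j, X j ⁻¹' s j := by
      rintro ω ⟨hA, hXi⟩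
      by_cases hEω : ω ∈ E
      · exact Or.inl hEω
      right
      simp only [hEdef, Set.mem_iUnion, Set.mem_preimage, Set.mem_Iic, not_exists, not_le] at hEω
      refine Set.mem_iInter.2 fun j => ?_
      by_cases hj : j = i
      · subst hj
        simp only [hsdef, if_pos rfl, Set.mem_preimage]
        exact hXi
      · simp only [hsdef, if_neg hj, Set.mem_preimage, Set.mem_Iic]
        calc X j ω ≤ ∑ k, X k ω :=
              Finset.single_le_sum (fun k _ => (hEω k).le) (Finset.mem_univ j)
          _ ≤ γ := hA
    have hsmeas : ∀ j, MeasurableSet (s j) := by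
      intro j
      by_cases h : j = i <;> simp [hsdef, h, measurableSet_Iic]
    have hprodval : ∏ j, ℙ (X j ⁻¹' s j) = gc * gg ^ (N - 1) := by
      rw [← Finset.mul_prod_erase Finset.univ _ (Finset.mem_univ i)]
      have h1 : ℙ (X i ⁻¹' s i) = gc := by
        simp only [hsdef, if_pos rfl]
        exact hXt i c hc
      have h2 : ∏ j ∈ Finset.univ.erase i, ℙ (X j ⁻¹' s j) = gg ^ (N - 1) := by
        rw [Finset.prod_congr rfl (fun j hj => ?_), Finset.prod_const,
          Finset.card_erase_of_mem (Finset.mem_univ i), Finset.card_univ, Fintype.card_fin]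
        have hj' : j ≠ i := Finset.ne_of_mem_erase hj
        simp only [hsdef, if_neg hj']
        exact hXt j γ hγ
      rw [h1, h2]
    calc ℙ (A ∩ X i ⁻¹' Set.Iic c) ≤ ℙ (E ∪ ⋂ j, X j ⁻¹' s j) := measure_mono hsub
      _ ≤ ℙ E + ℙ (⋂ j, X j ⁻¹' s j) := measure_union_le _ _
      _ = ℙ (⋂ j, X j ⁻¹' s j) := by rw [hE0, zero_add]
      _ = gc * gg ^ (N - 1) := by rw [hprod s hsmeas, hprodval]
  -- bound on ℙ (A \ B)
  have hdiff : ℙ (A \ B) ≤ N * (gc * gg ^ (N - 1)) := by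
    have hsub : A \ B ⊆ ⋃ i, (A ∩ X i ⁻¹' Set.Iic c) := by
      rintro ω ⟨hA, hB⟩
      simp only [hBdef, Set.mem_iInter, Set.mem_preimage, Set.mem_Ioi, not_forall, not_lt] at hB
      obtain ⟨i, hi⟩ := hB
      exact Set.mem_iUnion.2 ⟨i, hA, hi⟩
    calc ℙ (A \ B) ≤ ℙ (⋃ i, (A ∩ X i ⁻¹' Set.Iic c)) := measure_mono hsub
      _ ≤ ∑ i, ℙ (A ∩ X i ⁻¹' Set.Iic c) := measure_iUnion_fintype_le _ _
      _ ≤ ∑ _i : Fin N, (gc * gg ^ (N - 1)) := Finset.sum_le_sum fun i _ => key i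
      _ = N * (gc * gg ^ (N - 1)) := by
          rw [Finset.sum_const, Finset.card_univ, Fintype.card_fin, nsmul_eq_mul]
  -- split α
  have hsplit : ℙ A = ℙ (A ∩ B) + ℙ (A \ B) := (measure_inter_add_diff A hBmeas).symm
  -- real versions
  have hfin1 : ℙ (A ∩ B) ≠ ⊤ := measure_ne_top _ _
  have hfin2 : ℙ (A \ B) ≠ ⊤ := measure_ne_top _ _
  have hα_eq : α = α₁ + (ℙ (A \ B)).toReal := by
    rw [hα, hα₁, hAB, hsplit, ENNReal.toReal_add hfin1 hfin2]
  have hboundfin : (N : ENNReal) * (gc * gg ^ (N - 1)) ≠ ⊤ := by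
    refine ENNReal.mul_ne_top (ENNReal.natCast_ne_top N) ?_
    exact ENNReal.mul_ne_top (measure_ne_top _ _) (ENNReal.pow_ne_top (measure_ne_top _ _))
  have hdiffR : α - α₁ ≤ N * Phi (Real.log c) * (Phi (Real.log γ)) ^ (N - 1) := by
    rw [hα_eq]
    have := ENNReal.toReal_mono hboundfin hdiff
    rw [ENNReal.toReal_mul, ENNReal.toReal_mul, ENNReal.toReal_pow, ENNReal.toReal_natCast] at this
    calc α₁ + (ℙ (A \ B)).toReal - α₁ = (ℙ (A \ B)).toReal := by ring
      _ ≤ N * ((gc).toReal * (gg).toReal ^ (N - 1)) := this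
      _ = N * Phi (Real.log c) * (Phi (Real.log γ)) ^ (N - 1) := by
          rw [Phi, Phi, hgc, hgg]; ring
  -- lower bound on α
  have hlow : (Phi (Real.log (γ / N))) ^ N ≤ α := by
    have hT : ℙ (⋂ i, X i ⁻¹' Set.Iic (γ / N)) = gn ^ N := by
      rw [hprod _ (fun i => measurableSet_Iic)]
      have : ∀ i : Fin N, ℙ (X i ⁻¹' Set.Iic (γ / N)) = gn := fun i => hXt i _ hγN
      rw [Finset.prod_congr rfl (fun i _ => this i), Finset.prod_const, Finset.card_univ,
        Fintype.card_fin]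
    have hTA : (⋂ i, X i ⁻¹' Set.Iic (γ / N)) ⊆ A := by
      intro ω hω
      simp only [Set.mem_iInter, Set.mem_preimage, Set.mem_Iic] at hω
      show ∑ i, X i ω ≤ γ
      calc ∑ i, X i ω ≤ ∑ _i : Fin N, (γ / N) := Finset.sum_le_sum fun i _ => hω i
        _ = N * (γ / N) := by
            rw [Finset.sum_const, Finset.card_univ, Fintype.card_fin, nsmul_eq_mul]
        _ = γ := by field_simp
    have hle : gn ^ N ≤ ℙ A := hT ▸ measure_mono hTA
    have := ENNReal.toReal_mono (measure_ne_top _ _) hle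
    rw [ENNReal.toReal_pow] at this
    rw [hα]
    calc (Phi (Real.log (γ / N))) ^ N = (gn).toReal ^ N := by rw [Phi, hgn]
      _ ≤ (ℙ A).toReal := this
  -- positivity facts
  have hpn : 0 < Phi (Real.log (γ / N)) := Phi_pos _
  have hpg : 0 < Phi (Real.log γ) := Phi_pos _
  have hpc : 0 ≤ Phi (Real.log c) := ENNReal.toReal_nonneg
  have hαpos : 0 < α := lt_of_lt_of_le (pow_pos hpn N) hlow
  have hmain : (α - α₁) / α
      ≤ N * Phi (Real.log c) * (Phi (Real.log γ)) ^ (N - 1)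
          / (Phi (Real.log (γ / N))) ^ N := by
    apply div_le_div₀ (by positivity) hdiffR (pow_pos hpn N) hlow
  refine ⟨hmain, fun hchoice => ?_⟩
  have heq : N * Phi (Real.log c) * (Phi (Real.log γ)) ^ (N - 1)
      / (Phi (Real.log (γ / N))) ^ N = ε / 2 := by
    rw [hchoice]
    have h1 : (Phi (Real.log (γ / N))) ^ N ≠ 0 := by positivity
    have h2 : (Phi (Real.log γ)) ^ (N - 1) ≠ 0 := by positivity
    field_simp
  calc (α - α₁) / α ≤ _ := hmain
    _ = ε / 2 := heq
end

section
/- Let $\tilde f$ be the Gamma density with shape $k > 0$ and scale $\theta = \gamma/(Nk)$, let $f$ be the standard Log-normal density, and let $X_1,\dots,X_N$ be i.i.d. with density $\tilde f$. Define the likelihood ratio $\mathcal{L}(x_1,\dots,x_N) = \prod_i f(x_i)/\tilde f(x_i)$. Then $\mathbb{E}[\mathcal{L}^2(X_1,\dots,X_N)\mathbf{1}_{\{\sum X_i \le \gamma\}}] \le (\Gamma(k)\theta^k/\sqrt{2\pi})^{2N} \exp(2kN + k^2 N)$. -/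
open MeasureTheory Real

/-- The standard Log-normal density. -/
noncomputable def logNormalPdf (x : ℝ) : ℝ :=
  1 / (x * Real.sqrt (2 * Real.pi)) * Real.exp (-(Real.log x) ^ 2 / 2)

/-- The Gamma density with shape `k` and scale `θ`. -/
noncomputable def gammaPdf (k θ x : ℝ) : ℝ :=
  x ^ (k - 1) * Real.exp (-x / θ) / (Real.Gamma k * θ ^ k)

lemma ratio_eq {k θ x : ℝ} (hk : 0 < k) (hθ : 0 < θ) (hx : 0 < x) :
    logNormalPdf x / gammaPdf k θ x =
      (Real.Gamma k * θ ^ k / Real.sqrt (2 * Real.pi)) *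
        Real.exp (-(Real.log x) ^ 2 / 2 - k * Real.log x + x / θ) := by
  have hΓ : 0 < Real.Gamma k := Real.Gamma_pos_of_pos hk
  have hθk : 0 < θ ^ k := Real.rpow_pos_of_pos hθ k
  have hs : 0 < Real.sqrt (2 * Real.pi) := Real.sqrt_pos.mpr (by positivity)
  unfold logNormalPdf gammaPdf
  rw [Real.rpow_def_of_pos hx]
  rw [show (-(Real.log x) ^ 2 / 2 - k * Real.log x + x / θ) =
      (-(Real.log x) ^ 2 / 2) + (-(Real.log x)) + (-(Real.log x * (k - 1)))
        + (-(-x / θ)) by ring]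
  rw [Real.exp_add, Real.exp_add, Real.exp_add, Real.exp_neg (Real.log x),
    Real.exp_neg (Real.log x * (k - 1)), Real.exp_neg (-x / θ), Real.exp_log hx]
  have h1 := Real.exp_ne_zero (Real.log x * (k - 1))
  have h2 := Real.exp_ne_zero (-x / θ)
  field_simp

lemma ratio_sq_le {k θ x : ℝ} (hk : 0 < k) (hθ : 0 < θ) (hx : 0 < x) :
    (logNormalPdf x / gammaPdf k θ x) ^ 2 ≤
      (Real.Gamma k * θ ^ k / Real.sqrt (2 * Real.pi)) ^ 2 *
        Real.exp (k ^ 2 + 2 * x / θ) := by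
  rw [ratio_eq hk hθ hx, mul_pow, ← Real.exp_nat_mul]
  refine mul_le_mul_of_nonneg_left (Real.exp_le_exp.mpr ?_) (sq_nonneg _)
  push_cast
  have hdiv : (2:ℝ) * (x / θ) = 2 * x / θ := by ring
  nlinarith [sq_nonneg (Real.log x + k), hdiv]

theorem stmt_11 (N : ℕ) (hN : 0 < N) (γ k : ℝ) (hγ : 0 < γ) (hk : 0 < k)
    (θ : ℝ) (hθ : θ = γ / (N * k)) :
    ∫ x : Fin N → ℝ,
        Set.indicator {x : Fin N → ℝ | ∑ i, x i ≤ γ}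
          (fun x => (∏ i, logNormalPdf (x i) / gammaPdf k θ (x i)) ^ 2) x
      ∂(Measure.pi fun _ : Fin N =>
          (volume.restrict (Set.Ioi (0 : ℝ))).withDensity
            (fun x => ENNReal.ofReal (gammaPdf k θ x)))
      ≤ (Real.Gamma k * θ ^ k / Real.sqrt (2 * Real.pi)) ^ (2 * N)
          * Real.exp (2 * k * N + k ^ 2 * N) := by
  have hNk : (0:ℝ) < N * k := by positivity
  have hθpos : 0 < θ := by rw [hθ]; positivity
  have hγθ : γ / θ = N * k := by
    rw [hθ]; field_simp
  set A := Real.Gamma k * θ ^ k / Real.sqrt (2 * Real.pi) with hA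
  have hApos : 0 < A := by
    have hΓ : 0 < Real.Gamma k := Real.Gamma_pos_of_pos hk
    have hθk : 0 < θ ^ k := Real.rpow_pos_of_pos hθpos k
    have hs : 0 < Real.sqrt (2 * Real.pi) := Real.sqrt_pos.mpr (by positivity)
    positivity
  set C := A ^ (2 * N) * Real.exp (2 * k * N + k ^ 2 * N) with hC
  have hCpos : 0 < C := by positivity
  set ν := (volume.restrict (Set.Ioi (0 : ℝ))).withDensity
      (fun x => ENNReal.ofReal (gammaPdf k θ x)) with hν
  set μ := Measure.pi fun _ : Fin N => ν with hμ
  -- ν is a (sub)probability measure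
  have hν_univ : ν Set.univ ≤ 1 := by
    rw [hν, withDensity_apply _ MeasurableSet.univ, Measure.restrict_univ]
    have heq : ∀ x ∈ Set.Ioi (0:ℝ), ENNReal.ofReal (gammaPdf k θ x)
        = ProbabilityTheory.gammaPDF k θ⁻¹ x := by
      intro x hx
      rw [ProbabilityTheory.gammaPDF_of_nonneg (le_of_lt hx)]
      have hΓ : Real.Gamma k ≠ 0 := (Real.Gamma_pos_of_pos hk).ne'
      have hθk : θ ^ k ≠ 0 := (Real.rpow_pos_of_pos hθpos k).ne'
      have hgp : gammaPdf k θ x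
          = θ⁻¹ ^ k / Real.Gamma k * x ^ (k - 1) * Real.exp (-(θ⁻¹ * x)) := by
        unfold gammaPdf
        rw [Real.inv_rpow hθpos.le, show -(θ⁻¹ * x) = -x / θ by field_simp]
        ring
      rw [hgp]
    calc ∫⁻ x in Set.Ioi (0:ℝ), ENNReal.ofReal (gammaPdf k θ x)
        = ∫⁻ x in Set.Ioi (0:ℝ), ProbabilityTheory.gammaPDF k θ⁻¹ x :=
          setLIntegral_congr_fun measurableSet_Ioi heq
      _ ≤ ∫⁻ x, ProbabilityTheory.gammaPDF k θ⁻¹ x := setLIntegral_le_lintegral _ _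
      _ = 1 := ProbabilityTheory.lintegral_gammaPDF_eq_one hk (by positivity)
  have hμ_univ : μ Set.univ ≤ 1 := by
    rw [hμ, Measure.pi_univ]
    exact Finset.prod_le_one' (fun i _ => hν_univ)
  haveI : IsFiniteMeasure μ :=
    ⟨lt_of_le_of_lt hμ_univ ENNReal.one_lt_top⟩
  -- a.e. all coordinates positive
  have hν_compl : ν (Set.Ioi (0:ℝ))ᶜ = 0 := by
    rw [hν, withDensity_apply _ measurableSet_Ioi.compl,
      Measure.restrict_restrict measurableSet_Ioi.compl, Set.compl_inter_self,
      Measure.restrict_empty, lintegral_zero_measure]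
  have hae : ∀ᵐ x ∂μ, ∀ i, 0 < x i := by
    rw [ae_all_iff]
    intro i
    have : μ (Function.eval i ⁻¹' (Set.Ioi (0:ℝ))ᶜ) = 0 :=
      Measure.pi_eval_preimage_null _ hν_compl
    refine measure_mono_null ?_ this
    intro x hx
    simpa using hx
  -- pointwise bound
  have hbound : ∀ᵐ x ∂μ,
      ‖Set.indicator {x : Fin N → ℝ | ∑ i, x i ≤ γ}
        (fun x => (∏ i, logNormalPdf (x i) / gammaPdf k θ (x i)) ^ 2) x‖ ≤ C := by
    filter_upwards [hae] with x hx
    by_cases hxS : x ∈ {x : Fin N → ℝ | ∑ i, x i ≤ γ}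
    · rw [Set.indicator_of_mem hxS]
      rw [Real.norm_eq_abs, ← Finset.prod_pow, abs_of_nonneg
        (Finset.prod_nonneg (fun i _ => sq_nonneg _))]
      calc ∏ i, (logNormalPdf (x i) / gammaPdf k θ (x i)) ^ 2
          ≤ ∏ i : Fin N, (A ^ 2 * Real.exp (k ^ 2 + 2 * x i / θ)) :=
            Finset.prod_le_prod (fun i _ => sq_nonneg _)
              (fun i _ => ratio_sq_le hk hθpos (hx i))
        _ = A ^ (2 * N) * Real.exp (∑ i, (k ^ 2 + 2 * x i / θ)) := by
            rw [Finset.prod_mul_distrib, Finset.prod_const, ← Real.exp_sum,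
              Finset.card_univ, Fintype.card_fin, ← pow_mul, mul_comm 2 N, mul_comm N 2]
        _ ≤ C := by
            rw [hC]
            refine mul_le_mul_of_nonneg_left (Real.exp_le_exp.mpr ?_) (by positivity)
            have hsum : ∑ i, (k ^ 2 + 2 * x i / θ)
                = N * k ^ 2 + 2 * (∑ i, x i) / θ := by
              rw [Finset.sum_add_distrib, Finset.sum_const, Finset.card_univ,
                Fintype.card_fin]
              simp [Finset.sum_div, Finset.mul_sum, mul_div_assoc]
            rw [hsum]
            have hle : (∑ i, x i) / θ ≤ γ / θ := by
              gcongr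
              exact hxS
            rw [hγθ] at hle
            have h2 : 2 * (∑ i, x i) / θ = 2 * ((∑ i, x i) / θ) := by
              rw [mul_div_assoc]
            nlinarith [hk.le, hγθ]
    · rw [Set.indicator_of_notMem hxS]
      simp [hCpos.le]
  calc ∫ x, Set.indicator {x : Fin N → ℝ | ∑ i, x i ≤ γ}
        (fun x => (∏ i, logNormalPdf (x i) / gammaPdf k θ (x i)) ^ 2) x ∂μ
      ≤ ‖∫ x, Set.indicator {x : Fin N → ℝ | ∑ i, x i ≤ γ}
        (fun x => (∏ i, logNormalPdf (x i) / gammaPdf k θ (x i)) ^ 2) x ∂μ‖ :=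
        le_abs_self _
    _ ≤ C * (μ Set.univ).toReal := norm_integral_le_of_norm_le_const hbound
    _ ≤ C * 1 := by
        refine mul_le_mul_of_nonneg_left ?_ hCpos.le
        have := ENNReal.toReal_mono (by simp) hμ_univ
        simpa using this
    _ = C := mul_one C
end
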